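/- arXiv:2202.05192 — 2 statements merged into one kernel-verified Lean document; each statement's English description precedes it below -/
import Mathlib

section
/- Let y and z be von Mises–Fisher random vectors on S_p with parameters (κ_y, μ_y) and (κ_z, μ_z), let α ∈ (0,1)∪(1,∞), and suppose κ_α = ‖ακ_y μ_y + (1−α)κ_z μ_z‖₂ = 0. Then the Rényi divergence of order α of y from z equals d_α(y,z) = (ν/(α−1))·ln(κ_y^α κ_z^{1−α}/2) + (α/(α−1))·ln((1/Γ(ν+1))/I_ν(κ_y)) − ln((1/Γ(ν+1))/I_ν(κ_z)). -/
open MeasureTheory Real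
open scoped RealInnerProductSpace

/-- `ν = p/2 − 1`. -/
noncomputable def nuOf (p : ℕ) : ℝ := (p : ℝ) / 2 - 1

/-- The modified Bessel function of the first kind,
`I_ν(z) = (z/2)^ν ∑_{k=0}^∞ (z/2)^{2k}/(k!·Γ(ν+k+1))`. -/
noncomputable def besselI (ν z : ℝ) : ℝ :=
  (z / 2) ^ ν * ∑' k : ℕ, (z / 2) ^ (2 * k) / (Nat.factorial k * Real.Gamma (ν + k + 1))

/-- The ratio of modified Bessel functions `r_ν(κ) = I_{ν+1}(κ)/I_ν(κ)`. -/
noncomputable def besselRatio (ν κ : ℝ) : ℝ := besselI (ν + 1) κ / besselI ν κ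

/-- The standard surface measure on the unit sphere in `ℝ^p`. -/
noncomputable def sphereMeasure (p : ℕ) :
    Measure (Metric.sphere (0 : EuclideanSpace ℝ (Fin p)) 1) :=
  (volume : Measure (EuclideanSpace ℝ (Fin p))).toSphere

/-- The von Mises–Fisher partition function `C_ν(κ) = (2π)^{ν+1} I_ν(κ)/κ^ν`. -/
noncomputable def vmfC (ν κ : ℝ) : ℝ := (2 * Real.pi) ^ (ν + 1) * besselI ν κ / κ ^ ν

/-- The von Mises–Fisher density `f_p(x;κ,μ) = exp(κ⟨μ,x⟩)/C_ν(κ)`. -/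
noncomputable def vmf (p : ℕ) (κ : ℝ) (μ x : EuclideanSpace ℝ (Fin p)) : ℝ :=
  Real.exp (κ * ⟪μ, x⟫) / vmfC (nuOf p) κ

/-- The uniform density on the unit sphere in `ℝ^p`, `u(x) = Γ(ν+1)/(2π^{ν+1})`. -/
noncomputable def uniformDensity (p : ℕ) : ℝ :=
  Real.Gamma (nuOf p + 1) / (2 * Real.pi ^ (nuOf p + 1))

/-- The Rényi divergence of order `α` of `f_p(·;κ_y,μ_y)` from `f_p(·;κ_z,μ_z)`. -/
noncomputable def renyiDiv (p : ℕ) (α κy κz : ℝ) (μy μz : EuclideanSpace ℝ (Fin p)) : ℝ :=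
  (1 / (α - 1)) * Real.log (∫ x : Metric.sphere (0 : EuclideanSpace ℝ (Fin p)) 1,
      vmf p κy μy (x : EuclideanSpace ℝ (Fin p)) ^ α
        * vmf p κz μz (x : EuclideanSpace ℝ (Fin p)) ^ (1 - α) ∂(sphereMeasure p))

lemma fact_gamma_le' (ν : ℝ) (hν : 0 ≤ ν) (k : ℕ) :
    (Nat.factorial k : ℝ) * Real.Gamma (ν + 1) ≤ Real.Gamma (ν + k + 1) := by
  induction k with
  | zero => simp
  | succ n ih =>
    have hpos : (0:ℝ) < ν + n + 1 := by positivity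
    have hΓ : 0 < Real.Gamma (ν + 1) := Real.Gamma_pos_of_pos (by linarith)
    have hΓn : 0 < Real.Gamma (ν + n + 1) := Real.Gamma_pos_of_pos hpos
    have h1 : Real.Gamma (ν + (n+1:ℕ) + 1) = (ν + n + 1) * Real.Gamma (ν + n + 1) := by
      have := Real.Gamma_add_one (s := ν + n + 1) (ne_of_gt hpos)
      rw [← this]; push_cast; ring_nf
    rw [h1]
    have hle : ((n:ℝ)+1) ≤ ν + n + 1 := by linarith
    calc (Nat.factorial (n+1) : ℝ) * Real.Gamma (ν + 1)
        = ((n:ℝ)+1) * ((Nat.factorial n : ℝ) * Real.Gamma (ν+1)) := by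
          rw [Nat.factorial_succ]; push_cast; ring
      _ ≤ (ν + n + 1) * Real.Gamma (ν + n + 1) := by
          apply mul_le_mul hle ih (by positivity) (le_of_lt hpos)

set_option maxHeartbeats 800000 in
lemma besselI_series_summable' (ν z : ℝ) (hν : 0 ≤ ν) :
    Summable (fun k : ℕ => (z/2) ^ (2*k) / (Nat.factorial k * Real.Gamma (ν + k + 1))) := by
  have hΓ : 0 < Real.Gamma (ν + 1) := Real.Gamma_pos_of_pos (by linarith)
  apply Summable.of_nonneg_of_le
    (f := fun k : ℕ => ((z/2)^2)^k / (Nat.factorial k) * (1 / Real.Gamma (ν+1)))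
  · intro k
    have hΓk : 0 < Real.Gamma (ν + k + 1) := Real.Gamma_pos_of_pos (by positivity)
    have : (0:ℝ) ≤ (z/2)^(2*k) := by rw [pow_mul]; positivity
    positivity
  · intro k
    have hΓk : 0 < Real.Gamma (ν + k + 1) := Real.Gamma_pos_of_pos (by positivity)
    have hfact : (1:ℝ) ≤ Nat.factorial k := by
      exact_mod_cast Nat.one_le_iff_ne_zero.mpr (Nat.factorial_ne_zero k)
    have hΓle : Real.Gamma (ν + 1) ≤ Real.Gamma (ν + k + 1) := by
      calc Real.Gamma (ν+1) = 1 * Real.Gamma (ν+1) := (one_mul _).symm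
        _ ≤ (Nat.factorial k : ℝ) * Real.Gamma (ν+1) :=
            mul_le_mul_of_nonneg_right hfact hΓ.le
        _ ≤ _ := fact_gamma_le' ν hν k
    have hx : (z/2)^(2*k) = ((z/2)^2)^k := by rw [pow_mul]
    rw [hx, mul_one_div, div_div]
    gcongr
  · exact (Real.summable_pow_div_factorial ((z/2)^2)).mul_right _

lemma besselI_pos' (ν z : ℝ) (hν : 0 ≤ ν) (hz : 0 < z) : 0 < besselI ν z := by
  have hΓ : 0 < Real.Gamma (ν + 1) := Real.Gamma_pos_of_pos (by linarith)
  have h2 : (0:ℝ) < z/2 := by linarith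
  rw [besselI]
  apply mul_pos (Real.rpow_pos_of_pos h2 ν)
  apply Summable.tsum_pos (besselI_series_summable' ν z hν) _ 0
  · simp [hΓ]
  · intro k
    have hΓk : 0 < Real.Gamma (ν + k + 1) := Real.Gamma_pos_of_pos (by positivity)
    have : (0:ℝ) ≤ (z/2)^(2*k) := by positivity
    positivity

lemma sphereMeasure_univ_toReal' (p : ℕ) (hp : 2 ≤ p) :
    (sphereMeasure p Set.univ).toReal
      = 2 * Real.pi ^ (nuOf p + 1) / Real.Gamma (nuOf p + 1) := by
  haveI : Nonempty (Fin p) := ⟨⟨0, by omega⟩⟩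
  have hfr : Module.finrank ℝ (EuclideanSpace ℝ (Fin p)) = p := finrank_euclideanSpace_fin
  have hb := EuclideanSpace.volume_ball (Fin p) 0 1
  rw [sphereMeasure, Measure.toSphere_apply_univ, hfr, hb]
  have hcard : Fintype.card (Fin p) = p := Fintype.card_fin p
  rw [hcard]
  have h1 : (ENNReal.ofReal (1:ℝ)) ^ p = 1 := by simp
  rw [h1, one_mul]
  have hA : (0:ℝ) ≤ Real.sqrt π ^ p / Real.Gamma (p / 2 + 1) := by
    have : 0 < Real.Gamma ((p:ℝ) / 2 + 1) := Real.Gamma_pos_of_pos (by positivity)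
    positivity
  rw [ENNReal.toReal_mul, ENNReal.toReal_ofReal hA]
  simp only [ENNReal.toReal_natCast]
  have hν1 : nuOf p + 1 = (p:ℝ)/2 := by simp [nuOf]
  have hsq : Real.sqrt π ^ p = Real.pi ^ ((p:ℝ)/2) := by
    rw [Real.sqrt_eq_rpow, ← Real.rpow_natCast (π ^ ((1:ℝ)/2)) p,
      ← Real.rpow_mul Real.pi_pos.le]
    congr 1
    ring
  have hΓ : Real.Gamma ((p:ℝ)/2 + 1) = ((p:ℝ)/2) * Real.Gamma ((p:ℝ)/2) := by
    exact Real.Gamma_add_one (by positivity)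
  have hΓpos : 0 < Real.Gamma ((p:ℝ)/2) := Real.Gamma_pos_of_pos (by positivity)
  have hppos : (0:ℝ) < p := by positivity
  rw [hν1, hsq, hΓ]
  field_simp


/-- Rényi divergence between two von Mises–Fisher distributions in the special
case `κ_α = 0`. -/
theorem renyi_divergence_vmf_degenerate (p : ℕ) (hp : 2 ≤ p) (α : ℝ) (hα : 0 < α) (hα1 : α ≠ 1)
    (κy κz : ℝ) (hκy : 0 < κy) (hκz : 0 < κz)
    (μy μz : EuclideanSpace ℝ (Fin p)) (hμy : ‖μy‖ = 1) (hμz : ‖μz‖ = 1)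
    (hκα : ‖(α * κy) • μy + ((1 - α) * κz) • μz‖ = 0) :
    renyiDiv p α κy κz μy μz
      = nuOf p / (α - 1) * Real.log (κy ^ α * κz ^ (1 - α) / 2)
        + α / (α - 1) * Real.log ((1 / Real.Gamma (nuOf p + 1)) / besselI (nuOf p) κy)
        - Real.log ((1 / Real.Gamma (nuOf p + 1)) / besselI (nuOf p) κz) := by
  have hν0 : 0 ≤ nuOf p := by
    have : (2:ℝ) ≤ p := by exact_mod_cast hp
    simp only [nuOf]; linarith
  set ν := nuOf p with hνdef
  have hΓ : 0 < Real.Gamma (ν + 1) := Real.Gamma_pos_of_pos (by linarith)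
  have hIy : 0 < besselI ν κy := besselI_pos' ν κy hν0 hκy
  have hIz : 0 < besselI ν κz := besselI_pos' ν κz hν0 hκz
  have h2π : (0:ℝ) < 2 * π := by positivity
  have hCy : 0 < vmfC ν κy := by
    rw [vmfC]
    exact div_pos (mul_pos (Real.rpow_pos_of_pos h2π _) hIy) (Real.rpow_pos_of_pos hκy _)
  have hCz : 0 < vmfC ν κz := by
    rw [vmfC]
    exact div_pos (mul_pos (Real.rpow_pos_of_pos h2π _) hIz) (Real.rpow_pos_of_pos hκz _)
  have hv : (α * κy) • μy + ((1 - α) * κz) • μz = 0 := norm_eq_zero.mp hκα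
  -- the integrand is constant
  have hconst : ∀ x : Metric.sphere (0 : EuclideanSpace ℝ (Fin p)) 1,
      vmf p κy μy (x : EuclideanSpace ℝ (Fin p)) ^ α
        * vmf p κz μz (x : EuclideanSpace ℝ (Fin p)) ^ (1 - α)
      = 1 / (vmfC ν κy ^ α * vmfC ν κz ^ (1 - α)) := by
    intro x
    have hinner : (α * κy) * ⟪μy, (x : EuclideanSpace ℝ (Fin p))⟫
        + ((1 - α) * κz) * ⟪μz, (x : EuclideanSpace ℝ (Fin p))⟫ = 0 := by
      have h := congrArg (fun v : EuclideanSpace ℝ (Fin p) =>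
        ⟪v, (x : EuclideanSpace ℝ (Fin p))⟫) hv
      simpa [inner_add_left, real_inner_smul_left, Finset.mul_sum, mul_assoc] using h
    rw [vmf, vmf, Real.div_rpow (Real.exp_pos _).le hCy.le,
      Real.div_rpow (Real.exp_pos _).le hCz.le, ← Real.exp_mul, ← Real.exp_mul,
      div_mul_div_comm, ← Real.exp_add]
    have hz : κy * ⟪μy, (x : EuclideanSpace ℝ (Fin p))⟫ * α
        + κz * ⟪μz, (x : EuclideanSpace ℝ (Fin p))⟫ * (1 - α) = 0 := by linarith
    rw [hz, Real.exp_zero]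
  have hint : (fun x : Metric.sphere (0 : EuclideanSpace ℝ (Fin p)) 1 =>
      vmf p κy μy (x : EuclideanSpace ℝ (Fin p)) ^ α
        * vmf p κz μz (x : EuclideanSpace ℝ (Fin p)) ^ (1 - α))
      = fun _ => 1 / (vmfC ν κy ^ α * vmfC ν κz ^ (1 - α)) := funext hconst
  rw [renyiDiv, hint, integral_const, smul_eq_mul, measureReal_def, sphereMeasure_univ_toReal' p hp]
  -- positivity facts for logs
  have hCyα : 0 < vmfC ν κy ^ α := Real.rpow_pos_of_pos hCy _
  have hCzα : 0 < vmfC ν κz ^ (1-α) := Real.rpow_pos_of_pos hCz _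
  have hM : 0 < 2 * π ^ (ν + 1) / Real.Gamma (ν + 1) :=
    div_pos (by positivity) hΓ
  -- expand all logarithms
  have hlogCy : Real.log (vmfC ν κy)
      = (ν+1) * (Real.log 2 + Real.log π) + Real.log (besselI ν κy) - ν * Real.log κy := by
    rw [vmfC, Real.log_div (by positivity) (Real.rpow_pos_of_pos hκy _).ne',
      Real.log_mul (Real.rpow_pos_of_pos h2π _).ne' hIy.ne', Real.log_rpow h2π,
      Real.log_rpow hκy, Real.log_mul two_ne_zero Real.pi_pos.ne']
  have hlogCz : Real.log (vmfC ν κz)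
      = (ν+1) * (Real.log 2 + Real.log π) + Real.log (besselI ν κz) - ν * Real.log κz := by
    rw [vmfC, Real.log_div (by positivity) (Real.rpow_pos_of_pos hκz _).ne',
      Real.log_mul (Real.rpow_pos_of_pos h2π _).ne' hIz.ne', Real.log_rpow h2π,
      Real.log_rpow hκz, Real.log_mul two_ne_zero Real.pi_pos.ne']
  rw [one_div (vmfC ν κy ^ α * vmfC ν κz ^ (1 - α)),
    Real.log_mul hM.ne' (inv_ne_zero (mul_pos hCyα hCzα).ne'), Real.log_inv,
    Real.log_mul hCyα.ne' hCzα.ne', Real.log_rpow hCy, Real.log_rpow hCz,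
    Real.log_div (by positivity) hΓ.ne',
    Real.log_mul two_ne_zero (Real.rpow_pos_of_pos Real.pi_pos _).ne',
    Real.log_rpow Real.pi_pos, hlogCy, hlogCz]
  have hκyα : (0:ℝ) < κy ^ α := Real.rpow_pos_of_pos hκy _
  have hκzα : (0:ℝ) < κz ^ (1-α) := Real.rpow_pos_of_pos hκz _
  have hlog1 : Real.log (κy ^ α * κz ^ (1-α) / 2)
      = α * Real.log κy + (1-α) * Real.log κz - Real.log 2 := by
    rw [Real.log_div (mul_pos hκyα hκzα).ne' two_ne_zero,
      Real.log_mul hκyα.ne' hκzα.ne', Real.log_rpow hκy, Real.log_rpow hκz]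
  have hlog2 : Real.log ((1 / Real.Gamma (ν+1)) / besselI ν κy)
      = -Real.log (Real.Gamma (ν+1)) - Real.log (besselI ν κy) := by
    rw [Real.log_div (by positivity) hIy.ne', one_div, Real.log_inv]
  have hlog3 : Real.log ((1 / Real.Gamma (ν+1)) / besselI ν κz)
      = -Real.log (Real.Gamma (ν+1)) - Real.log (besselI ν κz) := by
    rw [Real.log_div (by positivity) hIz.ne', one_div, Real.log_inv]
  rw [hlog1, hlog2, hlog3]
  have hα1' : α - 1 ≠ 0 := sub_ne_zero.mpr hα1
  field_simp
  ring
end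

section
/- For every κ > 0, |ln(I_ν(κ))| ≤ (κ − (1/2)·ln(κ))·(1 + (max(1, 2ν)·ln(2) + 2·ln(Γ(ν+1)) + max(2c̄_ν, 2c̲_ν·ln(c̲_ν)))/(1 + ln(2))); in particular ln(I_ν(κ)) is an O(κ − ln(κ)/2) function as κ → ∞. -/
open Real

/-- `c̲_ν = ν + 1/2`. -/
noncomputable def cLow (ν : ℝ) : ℝ := ν + 1 / 2

/-- `c̄_ν = ν + 3/2`. -/
noncomputable def cHigh (ν : ℝ) : ℝ := ν + 3 / 2

lemma fact_mul_Gamma_le (ν : ℝ) (hν : 0 ≤ ν) : ∀ k : ℕ,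
    (k.factorial : ℝ) * Real.Gamma (ν + 1) ≤ Real.Gamma (ν + k + 1) := by
  intro k
  induction k with
  | zero => simp
  | succ k ih =>
    have hpos : (0:ℝ) < ν + k + 1 := by positivity
    have hΓ : Real.Gamma (ν + (k+1:ℕ) + 1) = (ν + k + 1) * Real.Gamma (ν + k + 1) := by
      rw [show ν + ((k:ℕ)+1:ℕ) + 1 = (ν + (k:ℕ) + 1) + 1 by push_cast; ring,
        Real.Gamma_add_one hpos.ne']
    have hfac : ((k+1).factorial : ℝ) = ((k:ℝ)+1) * (k.factorial : ℝ) := by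
      rw [Nat.factorial_succ]; push_cast; ring
    have hΓpos : 0 < Real.Gamma (ν + k + 1) := Real.Gamma_pos_of_pos hpos
    have hk1 : ((k:ℝ)+1) ≤ ν + k + 1 := by linarith
    rw [hΓ, hfac]
    calc ((k:ℝ)+1) * (k.factorial : ℝ) * Real.Gamma (ν + 1)
        ≤ ((k:ℝ)+1) * Real.Gamma (ν + k + 1) := by
          rw [mul_assoc]; exact mul_le_mul_of_nonneg_left ih (by positivity)
      _ ≤ (ν + k + 1) * Real.Gamma (ν + k + 1) :=
          mul_le_mul_of_nonneg_right hk1 hΓpos.le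

lemma two_mul_factorial_le (k : ℕ) :
    ((2*k).factorial : ℝ) ≤ 4 ^ k * ((k.factorial : ℝ) * (k.factorial : ℝ)) := by
  have h1 : (2*k).choose k * (k.factorial * k.factorial) = (2*k).factorial := by
    have := Nat.choose_mul_factorial_mul_factorial (show k ≤ 2*k by omega)
    rw [show 2*k - k = k by omega] at this
    rw [← this]; ring
  have h2 : (2*k).choose k ≤ 4 ^ k := by
    calc (2*k).choose k ≤ ∑ m ∈ Finset.range (2*k + 1), (2*k).choose m :=
          Finset.single_le_sum (fun i _ => Nat.zero_le _) (by simp [Nat.lt_succ_iff]; omega)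
      _ = 2 ^ (2*k) := Nat.sum_range_choose (2*k)
      _ = 4 ^ k := by rw [pow_mul]; norm_num
  have : ((2*k).factorial : ℕ) ≤ 4 ^ k * (k.factorial * k.factorial) := by
    rw [← h1]; exact Nat.mul_le_mul_right _ h2
  exact_mod_cast this

lemma besselI_log_bounds (ν κ : ℝ) (hν : 0 ≤ ν) (hκ : 0 < κ) :
    ν * (Real.log κ - Real.log 2) - Real.log (Real.Gamma (ν + 1)) ≤ Real.log (besselI ν κ) ∧
    Real.log (besselI ν κ) ≤ ν * (Real.log κ - Real.log 2) + κ - Real.log (Real.Gamma (ν + 1)) := by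
  have hx : (0:ℝ) < κ / 2 := by linarith
  set f : ℕ → ℝ := fun k => (κ/2) ^ (2*k) / (Nat.factorial k * Real.Gamma (ν + k + 1)) with hf
  have hΓ1 : 0 < Real.Gamma (ν + 1) := Real.Gamma_pos_of_pos (by linarith)
  have hΓk : ∀ k : ℕ, 0 < Real.Gamma (ν + k + 1) := fun k =>
    Real.Gamma_pos_of_pos (by positivity)
  have hfacpos : ∀ k : ℕ, (0:ℝ) < (Nat.factorial k : ℝ) := fun k => by
    exact_mod_cast Nat.factorial_pos k
  have hf0 : ∀ k, 0 < f k := fun k =>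
    div_pos (pow_pos hx _) (mul_pos (hfacpos k) (hΓk k))
  set g : ℕ → ℝ := fun k => κ ^ (2*k) / (Nat.factorial (2*k)) with hg
  have hinj : Function.Injective (fun k : ℕ => 2*k) := mul_right_injective₀ two_ne_zero
  have hg_sum : Summable g := by
    have := (Real.summable_pow_div_factorial κ).comp_injective hinj
    exact this
  have hfg : ∀ k, f k ≤ (Real.Gamma (ν+1))⁻¹ * g k := by
    intro k
    have e1 : (κ/2) ^ (2*k) = κ ^ (2*k) / 4 ^ k := by
      rw [div_pow]; congr 1
      rw [show (4:ℝ) = 2^2 by norm_num, ← pow_mul]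
    have e2 : (Real.Gamma (ν+1))⁻¹ * g k
        = κ ^ (2*k) / ((Nat.factorial (2*k)) * Real.Gamma (ν+1)) := by
      rw [hg]; field_simp
    rw [hf, e2]
    simp only
    rw [e1, div_div]
    apply div_le_div_of_nonneg_left (by positivity) (by positivity)
    calc ((Nat.factorial (2*k)) : ℝ) * Real.Gamma (ν+1)
        ≤ (4 ^ k * ((k.factorial : ℝ) * (k.factorial : ℝ))) * Real.Gamma (ν+1) :=
          mul_le_mul_of_nonneg_right (two_mul_factorial_le k) hΓ1.le
      _ = 4 ^ k * ((k.factorial : ℝ) * ((k.factorial : ℝ) * Real.Gamma (ν+1))) := by ring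
      _ ≤ 4 ^ k * ((k.factorial : ℝ) * Real.Gamma (ν + k + 1)) := by
          apply mul_le_mul_of_nonneg_left _ (by positivity)
          exact mul_le_mul_of_nonneg_left (fact_mul_Gamma_le ν hν k) (hfacpos k).le
  have hf_sum : Summable f :=
    Summable.of_nonneg_of_le (fun k => (hf0 k).le) hfg (hg_sum.mul_left _)
  have hS_lb : (Real.Gamma (ν+1))⁻¹ ≤ ∑' k, f k := by
    have h0 : f 0 = (Real.Gamma (ν+1))⁻¹ := by
      simp [hf, Nat.factorial_zero]
    calc (Real.Gamma (ν+1))⁻¹ = f 0 := h0.symm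
      _ ≤ ∑' k, f k := Summable.le_tsum hf_sum 0 (fun j _ => (hf0 j).le)
  have hexp : ∑' n : ℕ, κ ^ n / (Nat.factorial n) = Real.exp κ := by
    rw [Real.exp_eq_exp_ℝ, NormedSpace.exp_eq_tsum_div]
  have hS_ub : ∑' k, f k ≤ (Real.Gamma (ν+1))⁻¹ * Real.exp κ := by
    calc ∑' k, f k ≤ ∑' k, (Real.Gamma (ν+1))⁻¹ * g k :=
          Summable.tsum_le_tsum hfg hf_sum (hg_sum.mul_left _)
      _ = (Real.Gamma (ν+1))⁻¹ * ∑' k, g k := tsum_mul_left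
      _ ≤ (Real.Gamma (ν+1))⁻¹ * Real.exp κ := by
          apply mul_le_mul_of_nonneg_left _ (by positivity)
          rw [← hexp]
          exact Summable.tsum_le_tsum_of_inj (fun k : ℕ => 2*k) hinj
            (fun c _ => by positivity) (fun k => le_refl _) hg_sum
            (Real.summable_pow_div_factorial κ)
  have hSpos : 0 < ∑' k, f k := lt_of_lt_of_le (by positivity) hS_lb
  have hB : besselI ν κ = (κ/2) ^ ν * ∑' k, f k := rfl
  have hlogB : Real.log (besselI ν κ) = ν * Real.log (κ/2) + Real.log (∑' k, f k) := by
    rw [hB, Real.log_mul (Real.rpow_pos_of_pos hx ν).ne' hSpos.ne', Real.log_rpow hx]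
  have hlx : Real.log (κ/2) = Real.log κ - Real.log 2 :=
    Real.log_div hκ.ne' two_ne_zero
  constructor
  · rw [hlogB, hlx]
    have h := Real.log_le_log (by positivity) hS_lb
    rw [Real.log_inv] at h
    linarith
  · rw [hlogB, hlx]
    have h := Real.log_le_log hSpos hS_ub
    rw [Real.log_mul (by positivity) (Real.exp_ne_zero κ), Real.log_inv, Real.log_exp] at h
    linarith

lemma keyF (x : ℝ) (hx : 0 ≤ x) :
    (x - 1) * (1 + Real.log 2) ≤ max (x + 1) (x * Real.log x) := by
  have hl2a : 0.6931471803 < Real.log 2 := Real.log_two_gt_d9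
  have hl2b : Real.log 2 < 0.6931471808 := Real.log_two_lt_d9
  have hl2pos : 0 < Real.log 2 := by linarith
  rcases le_or_gt x (2 / Real.log 2 + 1) with h | h
  · refine le_trans ?_ (le_max_left _ _)
    have h1 : (x - 1) * Real.log 2 ≤ 2 := by
      rcases le_total x 1 with hx1 | hx1
      · nlinarith
      · have : x - 1 ≤ 2 / Real.log 2 := by linarith
        calc (x - 1) * Real.log 2 ≤ (2 / Real.log 2) * Real.log 2 :=
              mul_le_mul_of_nonneg_right this hl2pos.le
          _ = 2 := div_mul_cancel₀ _ hl2pos.ne'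
    nlinarith
  · refine le_trans ?_ (le_max_right _ _)
    have hxgt : 2.885 < x := by
      have : (2.885 : ℝ) < 2 / Real.log 2 := by
        rw [lt_div_iff₀ hl2pos]; nlinarith
      linarith
    have hx0 : (0:ℝ) < x := by linarith
    rcases le_or_gt (2 * Real.exp 1) x with h2 | h2
    · have hlog : 1 + Real.log 2 ≤ Real.log x := by
        have := Real.log_le_log (by positivity) h2
        rwa [Real.log_mul two_ne_zero (Real.exp_ne_zero 1), Real.log_exp, add_comm] at this
      nlinarith
    · have hlog : Real.log (2 * Real.exp 1 / x) ≤ 2 * Real.exp 1 / x - 1 :=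
        Real.log_le_sub_one_of_pos (by positivity)
      rw [Real.log_div (by positivity) hx0.ne',
        Real.log_mul two_ne_zero (Real.exp_ne_zero 1), Real.log_exp] at hlog
      have hmul : x * (Real.log 2 + 1 - Real.log x) ≤ 2 * Real.exp 1 - x := by
        have := mul_le_mul_of_nonneg_left hlog hx0.le
        calc x * (Real.log 2 + 1 - Real.log x) ≤ x * (2 * Real.exp 1 / x - 1) := this
          _ = 2 * Real.exp 1 - x := by field_simp
      have he : Real.exp 1 < 2.7182818286 := Real.exp_one_lt_d9
      have h3 : 2 * Real.exp 1 - x ≤ 1 + Real.log 2 := by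
        have h5 : (3.885 : ℝ) < x := by
          have : (2.885 : ℝ) < 2 / Real.log 2 := by
            rw [lt_div_iff₀ hl2pos]; nlinarith
          linarith
        nlinarith
      nlinarith

lemma final_arith (ν L κ lκ l2 M K : ℝ)
    (hν0 : 0 ≤ ν) (hl2a : (0.6931471803:ℝ) < l2) (hl2b : l2 < 0.6931471808)
    (hκ : 0 < κ) (hlκ1 : lκ ≤ κ - 1) (hlκ2 : l2 + lκ ≤ 2*κ - 1)
    (hL1 : -(1/2:ℝ) ≤ L) (hL2 : 0 ≤ ν * l2 + L)
    (hM2 : 2*ν ≤ M) (hK1 : 2*ν + 3 ≤ K) (hK2 : (2*ν - 1)*(1+l2) ≤ K) :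
    (ν*(lκ - l2) + κ - L) * (1+l2) ≤ (κ - 1/2*lκ) * ((1+l2) + (M*l2 + 2*L + K)) ∧
    (L + ν*l2 - ν*lκ) * (1+l2) ≤ (κ - 1/2*lκ) * ((1+l2) + (M*l2 + 2*L + K)) := by
  have hl2pos : (0:ℝ) < l2 := by linarith
  have hD : (0:ℝ) < 1 + l2 := by linarith
  have hT2 : (1+l2)/2 ≤ κ - 1/2*lκ := by linarith
  have hTpos : 0 < κ - 1/2*lκ := by linarith
  have hMl2 : 0 ≤ (M - 2*ν)*l2 := mul_nonneg (by linarith) hl2pos.le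
  constructor
  · have q0 : 0 ≤ (ν+1/2)*(2*κ-2*lκ-1)*(1+l2) :=
      mul_nonneg (mul_nonneg (by linarith) (by linarith)) hD.le
    have q2 : 0 ≤ (κ - 1/2*lκ)*(2*L+2-l2) := mul_nonneg hTpos.le (by linarith)
    have q3 : 0 ≤ (ν+1/2+L)*(1+l2) := mul_nonneg (by linarith) hD.le
    have q4 : 0 ≤ ν*l2*(1+l2) := mul_nonneg (mul_nonneg hν0 hl2pos.le) hD.le
    have q5 : 0 ≤ (κ - 1/2*lκ)*((M-2*ν)*l2 + (K-2*ν-3)) :=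
      mul_nonneg hTpos.le (by linarith)
    nlinarith [q0, q2, q3, q4, q5]
  · have w0 : 0 ≤ 2*ν*κ*(1+l2) := by positivity
    have w1 : 0 ≤ (ν*l2+L)*(2*(κ - 1/2*lκ)-(1+l2)) := mul_nonneg hL2 (by linarith)
    have w2 : 0 ≤ (κ - 1/2*lκ)*((M-2*ν)*l2 + (K-(2*ν-1)*(1+l2))) :=
      mul_nonneg hTpos.le (by linarith)
    nlinarith [w0, w1, w2]

lemma L_facts (p : ℕ) (hp : 2 ≤ p) :
    -(1/2:ℝ) ≤ Real.log (Real.Gamma (nuOf p + 1)) ∧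
    0 ≤ nuOf p * Real.log 2 + Real.log (Real.Gamma (nuOf p + 1)) := by
  have hl2a : 0.6931471803 < Real.log 2 := Real.log_two_gt_d9
  rcases (by omega : p = 2 ∨ p = 3 ∨ 4 ≤ p) with h | h | h
  · subst h
    have h1 : nuOf 2 = 0 := by norm_num [nuOf]
    rw [h1]
    norm_num [Real.Gamma_one]
  · subst h
    have h1 : nuOf 3 = 1/2 := by norm_num [nuOf]
    have hΓ : Real.Gamma (nuOf 3 + 1) = Real.sqrt π / 2 := by
      rw [h1, Real.Gamma_add_one (by norm_num : (1/2:ℝ) ≠ 0), Real.Gamma_one_half_eq]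
      ring
    have hs : (1.7:ℝ) ≤ Real.sqrt π := by
      rw [show (1.7:ℝ) = Real.sqrt (1.7^2) from (Real.sqrt_sq (by norm_num)).symm]
      apply Real.sqrt_le_sqrt
      nlinarith [Real.pi_gt_three]
    have hspos : (0:ℝ) < Real.sqrt π := by linarith
    have hinv : Real.log (2 / Real.sqrt π) ≤ 2 / Real.sqrt π - 1 :=
      Real.log_le_sub_one_of_pos (by positivity)
    have hlogeq : Real.log (2 / Real.sqrt π) = - Real.log (Real.sqrt π / 2) := by
      rw [show (2 / Real.sqrt π) = (Real.sqrt π / 2)⁻¹ by rw [inv_div], Real.log_inv]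
    have hfrac : 2 / Real.sqrt π ≤ 2 / 1.7 := by
      apply div_le_div_of_nonneg_left (by norm_num) (by norm_num) hs
    rw [hlogeq] at hinv
    have hLlb : -(2/1.7 - 1) ≤ Real.log (Real.Gamma (nuOf 3 + 1)) := by
      rw [hΓ]; linarith
    rw [h1] at hLlb ⊢
    constructor <;> linarith
  · have hν1 : 1 ≤ nuOf p := by
      unfold nuOf
      have : (4:ℝ) ≤ (p:ℝ) := by exact_mod_cast h
      linarith
    have hmono := Real.Gamma_strictMonoOn_Ici.monotoneOn
      (Set.mem_Ici.mpr (le_refl (2:ℝ)))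
      (Set.mem_Ici.mpr (show (2:ℝ) ≤ nuOf p + 1 by linarith))
      (show (2:ℝ) ≤ nuOf p + 1 by linarith)
    rw [Real.Gamma_two] at hmono
    have hL0 : 0 ≤ Real.log (Real.Gamma (nuOf p + 1)) := Real.log_nonneg hmono
    constructor
    · linarith
    · nlinarith

/-- `|ln(I_ν(κ))|` is bounded by an explicit multiple of `κ − ln(κ)/2`; in
particular `ln(I_ν(κ))` is an `O(κ − ln(κ)/2)` function as `κ → ∞`. -/
theorem abs_log_besselI_le (p : ℕ) (hp : 2 ≤ p) (κ : ℝ) (hκ : 0 < κ) :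
    |Real.log (besselI (nuOf p) κ)|
      ≤ (κ - (1 / 2) * Real.log κ)
          * (1 + (max 1 (2 * nuOf p) * Real.log 2 + 2 * Real.log (Real.Gamma (nuOf p + 1))
              + max (2 * cHigh (nuOf p)) (2 * cLow (nuOf p) * Real.log (cLow (nuOf p))))
            / (1 + Real.log 2)) := by
  have hp' : (2:ℝ) ≤ (p:ℝ) := by exact_mod_cast hp
  have hν0 : 0 ≤ nuOf p := by unfold nuOf; linarith
  obtain ⟨hlow, hub⟩ := besselI_log_bounds (nuOf p) κ hν0 hκ
  obtain ⟨hL1, hL2⟩ := L_facts p hp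
  have hl2a : (0.6931471803:ℝ) < Real.log 2 := Real.log_two_gt_d9
  have hl2b : Real.log 2 < 0.6931471808 := Real.log_two_lt_d9
  have hD : (0:ℝ) < 1 + Real.log 2 := by linarith
  have hlκ1 : Real.log κ ≤ κ - 1 := Real.log_le_sub_one_of_pos hκ
  have hlκ2 : Real.log 2 + Real.log κ ≤ 2*κ - 1 := by
    have h := Real.log_le_sub_one_of_pos (mul_pos two_pos hκ)
    rw [Real.log_mul two_ne_zero hκ.ne'] at h
    linarith
  have hM2 : 2 * nuOf p ≤ max 1 (2 * nuOf p) := le_max_right _ _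
  have hM1 : (1:ℝ) ≤ max 1 (2 * nuOf p) := le_max_left _ _
  have hK1 : 2 * nuOf p + 3
      ≤ max (2 * cHigh (nuOf p)) (2 * cLow (nuOf p) * Real.log (cLow (nuOf p))) := by
    refine le_trans ?_ (le_max_left _ _)
    unfold cHigh; linarith
  have hK2 : (2 * nuOf p - 1) * (1 + Real.log 2)
      ≤ max (2 * cHigh (nuOf p)) (2 * cLow (nuOf p) * Real.log (cLow (nuOf p))) := by
    have hkey := keyF (nuOf p + 1/2) (by linarith)
    rcases le_max_iff.mp hkey with hc | hc
    · refine le_trans ?_ (le_max_left _ _)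
      unfold cHigh; nlinarith
    · refine le_trans ?_ (le_max_right _ _)
      unfold cLow; nlinarith
  obtain ⟨hU, hV⟩ := final_arith (nuOf p) (Real.log (Real.Gamma (nuOf p + 1))) κ
    (Real.log κ) (Real.log 2) (max 1 (2 * nuOf p))
    (max (2 * cHigh (nuOf p)) (2 * cLow (nuOf p) * Real.log (cLow (nuOf p))))
    hν0 hl2a hl2b hκ hlκ1 hlκ2 hL1 hL2 hM2 hK1 hK2
  have heq : (κ - (1/2) * Real.log κ)
      * (1 + (max 1 (2 * nuOf p) * Real.log 2 + 2 * Real.log (Real.Gamma (nuOf p + 1))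
          + max (2 * cHigh (nuOf p)) (2 * cLow (nuOf p) * Real.log (cLow (nuOf p))))
        / (1 + Real.log 2))
      = ((κ - 1/2 * Real.log κ) * ((1 + Real.log 2)
          + (max 1 (2 * nuOf p) * Real.log 2 + 2 * Real.log (Real.Gamma (nuOf p + 1))
          + max (2 * cHigh (nuOf p)) (2 * cLow (nuOf p) * Real.log (cLow (nuOf p))))))
        / (1 + Real.log 2) := by
    field_simp
  rw [abs_le, heq]
  constructor
  · rw [neg_le, le_div_iff₀ hD]
    have h1 : -Real.log (besselI (nuOf p) κ)
        ≤ Real.log (Real.Gamma (nuOf p + 1)) + nuOf p * Real.log 2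
          - nuOf p * Real.log κ := by linarith
    have h2 := mul_le_mul_of_nonneg_right h1 hD.le
    nlinarith [hV, h2]
  · rw [le_div_iff₀ hD]
    have h2 := mul_le_mul_of_nonneg_right hub hD.le
    nlinarith [hU, h2]
end
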